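/- Let k ≥ 2 and s ≥ 1 be integers and let F ⊆ binom([n],k) be a k-graph with ν(F) ≤ s. Suppose U ⊆ [n] satisfies |U| = ks + k − 2 and every k-element subset of U belongs to F. Then every edge F ∈ F satisfies |F ∖ U| ≤ 1; in particular, no edge of F contains two vertices of [n] ∖ U. -/

import Mathlib

/-- The `(x,y)`-shift of a single edge `A` with respect to the family `F`. -/
def shiftEdge (x y : ℕ) (F : Finset (Finset ℕ)) (A : Finset ℕ) : Finset ℕ :=
  if y ∈ A ∧ x ∉ A ∧ insert x (A.erase y) ∉ F then insert x (A.erase y) else A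

/-- The `(x,y)`-shift of a family `F`. -/
def shiftFam (x y : ℕ) (F : Finset (Finset ℕ)) : Finset (Finset ℕ) :=
  F.image (shiftEdge x y F)

/-- The matching number: the largest size of a pairwise-disjoint subfamily. -/
noncomputable def matchingNumber (F : Finset (Finset ℕ)) : ℕ :=
  sSup {m | ∃ M ⊆ F, M.card = m ∧ (M : Set (Finset ℕ)).PairwiseDisjoint id}

/-- `F` is non-trivial on `[n]`: no vertex of `[n] = {1,…,n}` is isolated. -/
def NonTrivial (n : ℕ) (F : Finset (Finset ℕ)) : Prop :=
  ∀ v ∈ Finset.Icc 1 n, ∃ A ∈ F, v ∈ A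

/-- `F` is shifted on `Y`: all `(x,y)`-shifts with `x < y` in `Y` fix `F`. -/
def ShiftedOn (Y : Finset ℕ) (F : Finset (Finset ℕ)) : Prop :=
  ∀ x ∈ Y, ∀ y ∈ Y, x < y → shiftFam x y F = F

/-- The clique number of the `k`-graph `F` on `[n]`. -/
noncomputable def cliqueNum (n k : ℕ) (F : Finset (Finset ℕ)) : ℕ :=
  sSup {m | ∃ U ⊆ Finset.Icc 1 n, U.card = m ∧ Finset.powersetCard k U ⊆ F}

/-- The vertex-cover number of the `k`-graph `F` on `[n]`. -/
noncomputable def coverNum (n : ℕ) (F : Finset (Finset ℕ)) : ℕ :=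
  sInf {t | ∃ T ⊆ Finset.Icc 1 n, T.card = t ∧ ∀ A ∈ F, (A ∩ T).Nonempty}

/-- The link `N_F(x)`. -/
def nbr (F : Finset (Finset ℕ)) (x : ℕ) : Finset (Finset ℕ) :=
  (F.filter fun A => x ∈ A).image fun A => A.erase x

/-- The link `N_F(x,y)`. -/
def nbr2 (F : Finset (Finset ℕ)) (x y : ℕ) : Finset (Finset ℕ) :=
  (F.filter fun A => x ∈ A ∧ y ∈ A).image fun A => (A.erase x).erase y

/-- The link `N_F(x, ȳ)`. -/
def nbrBar (F : Finset (Finset ℕ)) (x y : ℕ) : Finset (Finset ℕ) :=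
  (F.filter fun A => x ∈ A ∧ y ∉ A).image fun A => A.erase x

/-- The extremal family `E₀(n,k,s)`. -/
def E0 (n k s : ℕ) : Finset (Finset ℕ) :=
  Finset.powersetCard k (Finset.Icc 1 (k * s + k - 2)) ∪
  ((Finset.powersetCard k (Finset.Icc 1 n)).filter
    (fun A => A \ Finset.Icc 1 (k * s + k - 2) = {k * s + k - 1} ∧
      (A ∩ Finset.Icc 1 (k - 1)).Nonempty)) ∪
  ((Finset.Icc (k * s + k) n).image (fun x => insert x (Finset.Icc 1 (k - 1))))

open Classical in
/-- The extremal family `E₁(n,k,s)`. -/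
noncomputable def E1 (n k s : ℕ) : Finset (Finset ℕ) :=
  Finset.powersetCard k (Finset.Icc 1 (k * s + k - 2)) ∪
  ((Finset.powersetCard k (Finset.Icc 1 n)).filter
    (fun A => 1 ∈ A ∧ ∃ x ∈ Finset.Icc (k * s + k - 1) n,
      A \ Finset.Icc 1 (k * s + k - 2) = {x}))

/-- `F` is `s`-saturated on `[n]`. -/
def Saturated (n k s : ℕ) (F : Finset (Finset ℕ)) : Prop :=
  matchingNumber F ≤ s ∧
  ∀ G ∈ Finset.powersetCard k (Finset.Icc 1 n), G ∉ F →
    matchingNumber (insert G F) = s + 1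



lemma exists_blocks (k : ℕ) (hk : 1 ≤ k) : ∀ (s : ℕ) (V : Finset ℕ), k * s ≤ V.card →
    ∃ M : Finset (Finset ℕ), M.card = s ∧ (∀ B ∈ M, B.card = k ∧ B ⊆ V) ∧
      (M : Set (Finset ℕ)).PairwiseDisjoint id := by
  intro s
  induction s with
  | zero => intro V _; exact ⟨∅, by simp, by simp, by simp⟩
  | succ s ih =>
    intro V hV
    have hkV : k ≤ V.card := by nlinarith [Nat.mul_le_mul_left k (Nat.le_succ s)]
    obtain ⟨B, hBV, hBcard⟩ := Finset.exists_subset_card_eq hkV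
    have hcard : k * s ≤ (V \ B).card := by
      rw [Finset.card_sdiff_of_subset hBV, hBcard]
      have : k * (s + 1) = k * s + k := by ring
      omega
    obtain ⟨M, hMcard, hMmem, hMdisj⟩ := ih (V \ B) hcard
    have hBne : B.Nonempty := Finset.card_pos.mp (by omega)
    have hdisj : ∀ C ∈ M, Disjoint B C := by
      intro C hC
      exact Finset.disjoint_left.mpr fun a haB haC =>
        (Finset.mem_sdiff.mp ((hMmem C hC).2 haC)).2 haB
    have hBnotM : B ∉ M := fun h => hBne.ne_empty
      (disjoint_self.mp (hdisj B h))
    refine ⟨insert B M, ?_, ?_, ?_⟩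
    · rw [Finset.card_insert_of_notMem hBnotM, hMcard]
    · intro C hC
      rcases Finset.mem_insert.mp hC with h | h
      · exact h ▸ ⟨hBcard, hBV⟩
      · exact ⟨(hMmem C h).1, (hMmem C h).2.trans (Finset.sdiff_subset)⟩
    · rw [Finset.coe_insert]
      exact hMdisj.insert fun C hC _ => hdisj C hC

lemma le_matchingNumber (F : Finset (Finset ℕ)) (M : Finset (Finset ℕ))
    (hMF : M ⊆ F) (hdisj : (M : Set (Finset ℕ)).PairwiseDisjoint id) :
    M.card ≤ matchingNumber F := by
  apply le_csSup
  · exact ⟨F.card, fun m ⟨N, hN, hc, _⟩ => hc ▸ Finset.card_le_card hN⟩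
  · exact ⟨M, hMF, rfl, hdisj⟩

/-- every edge leaves at most one vertex outside a clique of size `ks+k-2`. -/
theorem stmt12 (n k s : ℕ) (hk : 2 ≤ k) (hs : 1 ≤ s)
    (F : Finset (Finset ℕ)) (hF : F ⊆ Finset.powersetCard k (Finset.Icc 1 n))
    (hnu : matchingNumber F ≤ s)
    (U : Finset ℕ) (hU : U ⊆ Finset.Icc 1 n) (hUcard : U.card = k * s + k - 2)
    (hclique : Finset.powersetCard k U ⊆ F) :
    ∀ A ∈ F, (A \ U).card ≤ 1 := by
  intro A hA
  by_contra hbad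
  push_neg at hbad
  have hAcard : A.card = k := (Finset.mem_powersetCard.mp (hF hA)).2
  have hinter : (A \ U).card + (A ∩ U).card = A.card :=
    Finset.card_sdiff_add_card_inter A U
  have hAU : (A ∩ U).card ≤ k - 2 := by omega
  have hUA : k * s ≤ (U \ A).card := by
    have h1 : (U \ A).card + (U ∩ A).card = U.card :=
      Finset.card_sdiff_add_card_inter U A
    rw [Finset.inter_comm] at h1
    omega
  obtain ⟨M, hMcard, hMmem, hMdisj⟩ := exists_blocks k (by omega) s (U \ A) hUA
  have hMF : ∀ B ∈ M, B ∈ F := fun B hB =>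
    hclique (Finset.mem_powersetCard.mpr
      ⟨(hMmem B hB).2.trans Finset.sdiff_subset, (hMmem B hB).1⟩)
  have hAdisj : ∀ B ∈ M, Disjoint A B := by
    intro B hB
    exact Finset.disjoint_left.mpr fun a haA haB =>
      (Finset.mem_sdiff.mp ((hMmem B hB).2 haB)).2 haA
  have hAne : A.Nonempty := Finset.card_pos.mp (by omega)
  have hAnotM : A ∉ M := fun h => hAne.ne_empty
    (disjoint_self.mp (hAdisj A h))
  have hle : (insert A M).card ≤ matchingNumber F := by
    apply le_matchingNumber
    · intro C hC
      rcases Finset.mem_insert.mp hC with h | h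
      · exact h ▸ hA
      · exact hMF C h
    · rw [Finset.coe_insert]
      exact hMdisj.insert fun B hB _ => hAdisj B hB
  rw [Finset.card_insert_of_notMem hAnotM, hMcard] at hle
  omega
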